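/- Let 0 -> V >< W -> ghat >< hhat -> g >< h -> 0 be an abelian extension of a matched pair of 3-Lie algebras (g,h,rho,psi) by (V,W), let (s1,s2) be a section, and let (V,W,alpha,beta) be the induced representation. Define omega(x1,x2,x3) = [s1(x1),s1(x2),s1(x3)] - s1([x1,x2,x3]), theta(a1,a2,a3) = [s2(a1),s2(a2),s2(a3)] - s2([a1,a2,a3]), nu(x1,x2)a = rhohat(s1(x1),s1(x2))s2(a) - s2(rho(x1,x2)a), and phi(a1,a2)x = psihat(s2(a1),s2(a2))s1(x) - s1(psi(a1,a2)x). Then (omega,theta,nu,phi) is a 2-cocycle of (g,h,rho,psi) with coefficients in the induced representation, its cohomology class in H2_MPL(g,h;V,W) does not depend on the choice of the section, and isomorphic abelian extensions determine the same cohomology class. -/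

import Mathlib

/-- A 3-Lie algebra over `k`: an alternating trilinear bracket satisfying the
fundamental (Jacobi/Filippov) identity. -/
structure ThreeLie (k : Type*) (g : Type*) [CommRing k] [AddCommGroup g] [Module k g] where
  br : g →ₗ[k] g →ₗ[k] g →ₗ[k] g
  alt₁ : ∀ x y, br x x y = 0
  alt₂ : ∀ x y, br x y y = 0
  fund : ∀ x1 x2 y1 y2 y3,
    br x1 x2 (br y1 y2 y3) =
      br (br x1 x2 y1) y2 y3 + br y1 (br x1 x2 y2) y3 + br y1 y2 (br x1 x2 y3)

/-- A representation of a 3-Lie algebra `(g, L)` on a module `V`. -/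
structure Rep3 (k : Type*) (g V : Type*) [CommRing k] [AddCommGroup g] [Module k g]
    [AddCommGroup V] [Module k V] (L : ThreeLie k g) where
  ρ : g →ₗ[k] g →ₗ[k] Module.End k V
  skew : ∀ x, ρ x x = 0
  rep1 : ∀ x1 x2 x3 x4 v, ρ x1 x2 (ρ x3 x4 v) =
    ρ x3 x4 (ρ x1 x2 v) + ρ (L.br x1 x2 x3) x4 v + ρ x3 (L.br x1 x2 x4) v
  rep2 : ∀ x1 x2 x3 x4 v, ρ (L.br x1 x2 x3) x4 v =
    ρ x1 x2 (ρ x3 x4 v) + ρ x2 x3 (ρ x1 x4 v) + ρ x3 x1 (ρ x2 x4 v)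

/-- A matched pair of 3-Lie algebras `(g, h, ρ, ψ)`. -/
structure MatchedPair (k : Type*) (g h : Type*) [CommRing k] [AddCommGroup g] [Module k g]
    [AddCommGroup h] [Module k h] where
  Lg : ThreeLie k g
  Lh : ThreeLie k h
  ρ : Rep3 k g h Lg
  ψ : Rep3 k h g Lh
  mp1 : ∀ a4 a5 x1 x2 x3, ψ.ρ a4 a5 (Lg.br x1 x2 x3) =
    Lg.br (ψ.ρ a4 a5 x1) x2 x3 + Lg.br x1 (ψ.ρ a4 a5 x2) x3 + Lg.br x1 x2 (ψ.ρ a4 a5 x3)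
  mp2 : ∀ x1 x2 x4 a3 a5, ψ.ρ (ρ.ρ x1 x2 a3) a5 x4 =
    ψ.ρ (ρ.ρ x1 x4 a5) a3 x2 - ψ.ρ (ρ.ρ x2 x4 a5) a3 x1 + Lg.br x1 x2 (ψ.ρ a3 a5 x4)
  mp3 : ∀ a2 a3 x1 x4 x5, Lg.br (ψ.ρ a2 a3 x1) x4 x5 =
    ψ.ρ a2 a3 (Lg.br x1 x4 x5) + ψ.ρ (ρ.ρ x4 x5 a2) a3 x1 + ψ.ρ a2 (ρ.ρ x4 x5 a3) x1
  mp4 : ∀ x4 x5 a1 a2 a3, ρ.ρ x4 x5 (Lh.br a1 a2 a3) =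
    Lh.br (ρ.ρ x4 x5 a1) a2 a3 + Lh.br a1 (ρ.ρ x4 x5 a2) a3 + Lh.br a1 a2 (ρ.ρ x4 x5 a3)
  mp5 : ∀ a1 a2 a4 x3 x5, ρ.ρ (ψ.ρ a1 a2 x3) x5 a4 =
    ρ.ρ (ψ.ρ a1 a4 x5) x3 a2 - ρ.ρ (ψ.ρ a2 a4 x5) x3 a1 + Lh.br a1 a2 (ρ.ρ x3 x5 a4)
  mp6 : ∀ x2 x3 a1 a4 a5, Lh.br (ρ.ρ x2 x3 a1) a4 a5 =
    ρ.ρ x2 x3 (Lh.br a1 a4 a5) + ρ.ρ (ψ.ρ a4 a5 x2) x3 a1 + ρ.ρ x2 (ψ.ρ a4 a5 x3) a1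

section MPRepSec

variable (k : Type*) (g h V W : Type*) [CommRing k]
  [AddCommGroup g] [Module k g] [AddCommGroup h] [Module k h]
  [AddCommGroup V] [Module k V] [AddCommGroup W] [Module k W]

/-- The raw data of a representation of a matched pair of 3-Lie algebras. -/
structure MPRepData where
  ρV : g →ₗ[k] g →ₗ[k] Module.End k V
  ψV : h →ₗ[k] h →ₗ[k] Module.End k V
  ρW : g →ₗ[k] g →ₗ[k] Module.End k W
  ψW : h →ₗ[k] h →ₗ[k] Module.End k W
  A : V →ₗ[k] g →ₗ[k] h →ₗ[k] W
  B : W →ₗ[k] h →ₗ[k] g →ₗ[k] V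

variable {k g h V W}

/-- A representation `(V, W, α, β)` of a matched pair of 3-Lie algebras
`(g, h, ρ, ψ)` (Definition 2.3 of arXiv:2508.14044). -/
structure MPRep (M : MatchedPair k g h) where
  rV : Rep3 k g V M.Lg
  pV : Rep3 k h V M.Lh
  rW : Rep3 k g W M.Lg
  pW : Rep3 k h W M.Lh
  A : V →ₗ[k] g →ₗ[k] h →ₗ[k] W
  B : W →ₗ[k] h →ₗ[k] g →ₗ[k] V
  iden1 : ∀ a1 a2 x2 x3 v1, pV.ρ a1 a2 (rV.ρ x2 x3 v1) =
    rV.ρ (M.ψ.ρ a1 a2 x2) x3 v1 + rV.ρ x2 (M.ψ.ρ a1 a2 x3) v1 + rV.ρ x2 x3 (pV.ρ a1 a2 v1)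
  iden2 : ∀ a1 a2 x1 x3 v2, pV.ρ a1 a2 (rV.ρ x1 x3 v2) =
    rV.ρ (M.ψ.ρ a1 a2 x1) x3 v2 + rV.ρ x1 (M.ψ.ρ a1 a2 x3) v2 + rV.ρ x1 x3 (pV.ρ a1 a2 v2)
  iden3 : ∀ a1 a2 x1 x2 v3, pV.ρ a1 a2 (rV.ρ x1 x2 v3) =
    rV.ρ (M.ψ.ρ a1 a2 x1) x2 v3 + rV.ρ x1 (M.ψ.ρ a1 a2 x2) v3 + rV.ρ x1 x2 (pV.ρ a1 a2 v3)
  iden4 : ∀ w1 w2 a1 a2 x1 x2 x3,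
    B w1 a2 (M.Lg.br x1 x2 x3) - B w2 a1 (M.Lg.br x1 x2 x3) =
      rV.ρ x2 x3 (B w1 a2 x1 - B w2 a1 x1) + rV.ρ x1 x3 (B w1 a2 x2 - B w2 a1 x2)
      + rV.ρ x1 x2 (B w1 a2 x3 - B w2 a1 x3)
  iden5 : ∀ x2 x3 a1 a2 v1, rV.ρ x2 (M.ψ.ρ a1 a2 x3) v1 = pV.ρ (M.ρ.ρ x2 x3 a2) a1 v1
  iden6 : ∀ x1 x3 a1 a2 v2, rV.ρ x1 (M.ψ.ρ a1 a2 x3) v2 = pV.ρ (M.ρ.ρ x1 x3 a2) a1 v2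
  iden7 : ∀ x1 x2 a1 a2 v3, rV.ρ x1 x2 (pV.ρ a1 a2 v3) = pV.ρ (M.ρ.ρ x1 x2 a1) a2 v3
  iden8 : ∀ x1 x2 x3 a1 a2 v1 v2 v3 w1 w2,
    rV.ρ x1 x2 (B w1 a2 x3 - B w2 a1 x3) =
      B (rW.ρ x2 x3 w2 + A v2 x3 a2 - A v3 x1 a2) a1 x1 - B w1 (M.ρ.ρ x2 x3 a2) x1
      - B (rW.ρ x1 x3 w2 + A v1 x3 a2 - A v3 x1 a2) a1 x2 + B w1 (M.ρ.ρ x1 x3 a2) x2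
      + B (rW.ρ x1 x2 w1 + A v1 x2 a1 - A v2 x1 a1) a2 x3 - B w2 (M.ρ.ρ x1 x2 a1) x3
  iden9 : ∀ x2 x3 a1 a2 v1, rV.ρ x2 x3 (pV.ρ a1 a2 v1) =
    pV.ρ a1 a2 (rV.ρ x2 x3 v1) + pV.ρ (M.ρ.ρ x2 x3 a1) a2 v1 + pV.ρ a1 (M.ρ.ρ x2 x3 a2) v1
  iden10 : ∀ x1 x2 x3 a1 a2 v2 v3 w1 w2,
    rV.ρ x2 x3 (B w1 a2 x1 - B w2 a1 x1) =
      (B w1 a2 (M.Lg.br x1 x2 x3) - B w2 a1 (M.Lg.br x1 x2 x3))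
      - B w2 (M.ρ.ρ x2 x3 a1) x1 + B w1 (M.ρ.ρ x2 x3 a2) x1
      + B (rW.ρ x2 x3 w1 + A v2 x3 a1 - A v3 x2 a1) a2 x1
      - B (rW.ρ x2 x2 w2 + A v2 x3 a2 - A v3 x2 a2) a1 x1
  iden11 : ∀ a1 a2 x1 x3 v2, rV.ρ (M.ψ.ρ a1 a2 x1) x3 v2 = pV.ρ a1 a2 (rV.ρ x1 x3 v2)
  iden12 : ∀ a1 a2 x1 x2 v3, rV.ρ (M.ψ.ρ a1 a2 x1) x2 v3 = pV.ρ a1 a2 (rV.ρ x1 x2 v3)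
  iden13 : ∀ x1 x2 a2 a3 w1, rW.ρ x1 x2 (pW.ρ a2 a3 w1) =
    pW.ρ (M.ρ.ρ x1 x2 a2) a3 w1 + pW.ρ a2 (M.ρ.ρ x1 x2 a3) w1 + pW.ρ a2 a3 (rW.ρ x1 x2 w1)
  iden14 : ∀ x1 x2 a1 a3 w2, rW.ρ x1 x2 (pW.ρ a1 a3 w2) =
    pW.ρ (M.ρ.ρ x1 x2 a1) a3 w2 + pW.ρ a1 (M.ρ.ρ x1 x2 a3) w2 + pW.ρ a1 a3 (rW.ρ x1 x2 w2)
  iden15 : ∀ x1 x2 a1 a2 w3, rW.ρ x1 x2 (pW.ρ a1 a2 w3) =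
    pW.ρ (M.ρ.ρ x1 x2 a1) a2 w3 + pW.ρ a1 (M.ρ.ρ x1 x2 a2) w3 + pW.ρ a1 a2 (rW.ρ x1 x2 w3)
  iden16 : ∀ v1 v2 x1 x2 a1 a2 a3,
    A v1 x2 (M.Lh.br a1 a2 a3) - A v2 x1 (M.Lh.br a1 a2 a3) =
      pW.ρ a2 a3 (A v1 x2 a1 - A v2 x1 a1) + pW.ρ a1 a3 (A v1 x1 a2 + A v2 x2 a2)
      + pW.ρ a1 a2 (A v1 x2 a3 - A v2 x1 a3)
  iden17 : ∀ a2 a3 x1 x2 w1, pW.ρ a2 (M.ρ.ρ x1 x2 a3) w1 = rW.ρ (M.ψ.ρ a2 a3 x2) x1 w1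
  iden18 : ∀ a1 a3 x1 x2 w2, pW.ρ a1 (M.ρ.ρ x1 x2 a3) w2 = rW.ρ (M.ψ.ρ a1 a3 x2) x1 w2
  iden19 : ∀ a1 a2 x1 x2 w3, pW.ρ a1 a2 (rW.ρ x1 x2 w3) = rW.ρ (M.ψ.ρ a1 a2 x1) x2 w3
  iden20 : ∀ a1 a2 a3 x1 x2 v1 v2 w1 w2 w3,
    pW.ρ a1 a2 (A v1 x2 a3 - A v2 x1 a3) =
      A (pV.ρ a2 a3 v2 + B w2 a3 x2 - B w3 a1 x2) x1 a1 - A v1 (M.ψ.ρ a2 a3 x2) a1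
      - A (pV.ρ a1 a3 v2 + B w1 a3 x2 - B w3 a1 x2) x1 a2 + A v1 (M.ψ.ρ a1 a3 x2) a2
      + A (pV.ρ a1 a2 v1 + B w1 a2 x1 - B w2 a1 x1) x2 a3 - A v2 (M.ψ.ρ a1 a2 x1) a3
  iden21 : ∀ a2 a3 x1 x2 w1, pW.ρ a2 a3 (rW.ρ x1 x2 w1) =
    rW.ρ x1 x2 (pW.ρ a2 a3 w1) + rW.ρ (M.ψ.ρ a2 a3 x1) x2 w1 + rW.ρ x1 (M.ψ.ρ a2 a3 x2) w1
  iden22 : ∀ a1 a2 a3 x1 x2 v1 v2 w2 w3,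
    pW.ρ a2 a3 (A v1 x2 a1 - A v2 x1 a1) =
      (A v1 x2 (M.Lh.br a1 a2 a3) - A v2 x1 (M.Lh.br a1 a2 a3))
      - A v2 (M.ψ.ρ a2 a3 x1) a1 + A v1 (M.ψ.ρ a2 a3 x2) a1
      + A (pV.ρ a2 a3 v1 + B w2 a3 x1 - B w3 a2 x1) x2 a1
      - A (pV.ρ a2 a2 v2 + B w2 a3 x2 - B w3 a2 x2) x1 a1
  iden23 : ∀ x1 x2 a1 a3 w2, pW.ρ (M.ρ.ρ x1 x2 a1) a3 w2 = rW.ρ x1 x2 (pW.ρ a1 a3 w2)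
  iden24 : ∀ x1 x2 a1 a2 w3, pW.ρ (M.ρ.ρ x1 x2 a1) a2 w3 = rW.ρ x1 x2 (pW.ρ a1 a2 w3)

/-- Forget the axioms of a matched-pair representation. -/
def MPRep.toData {M : MatchedPair k g h} (R : MPRep (V := V) (W := W) M) :
    MPRepData k g h V W :=
  ⟨R.rV.ρ, R.pV.ρ, R.rW.ρ, R.pW.ρ, R.A, R.B⟩

end MPRepSec

/-- The adjoint representation data of a matched pair on itself. -/
def adjData {k g h : Type*} [CommRing k] [AddCommGroup g] [Module k g]
    [AddCommGroup h] [Module k h] (M : MatchedPair k g h) : MPRepData k g h g h :=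
  ⟨M.Lg.br, M.ψ.ρ, M.ρ.ρ, M.Lh.br, M.ρ.ρ, M.ψ.ρ⟩
section CochainSec

variable (k : Type*) (g h V W : Type*) [CommRing k]
  [AddCommGroup g] [Module k g] [AddCommGroup h] [Module k h]
  [AddCommGroup V] [Module k V] [AddCommGroup W] [Module k W]

/-- A 2-cochain `(ω, θ, ν, φ)` of a matched pair of 3-Lie algebras with
coefficients in a pair of modules `(V, W)`. -/
structure Cochain2 where
  ω : g →ₗ[k] g →ₗ[k] g →ₗ[k] V
  θ : h →ₗ[k] h →ₗ[k] h →ₗ[k] W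
  ν : g →ₗ[k] g →ₗ[k] h →ₗ[k] W
  φ : h →ₗ[k] h →ₗ[k] g →ₗ[k] V
  ω_alt₁ : ∀ x y, ω x x y = 0
  ω_alt₂ : ∀ x y, ω x y y = 0
  θ_alt₁ : ∀ a b, θ a a b = 0
  θ_alt₂ : ∀ a b, θ a b b = 0
  ν_skew : ∀ x, ν x x = 0
  φ_skew : ∀ a, φ a a = 0

variable {k g h V W}

instance : Sub (Cochain2 k g h V W) :=
  ⟨fun c d =>
    { ω := c.ω - d.ω
      θ := c.θ - d.θ
      ν := c.ν - d.ν
      φ := c.φ - d.φ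
      ω_alt₁ := by intro x y; simp [c.ω_alt₁, d.ω_alt₁]
      ω_alt₂ := by intro x y; simp [c.ω_alt₂, d.ω_alt₂]
      θ_alt₁ := by intro a b; simp [c.θ_alt₁, d.θ_alt₁]
      θ_alt₂ := by intro a b; simp [c.θ_alt₂, d.θ_alt₂]
      ν_skew := by intro x; simp [c.ν_skew, d.ν_skew]
      φ_skew := by intro a; simp [c.φ_skew, d.φ_skew] }⟩

/-- The eight 2-cocycle identities (2co-1)–(2co-8) of arXiv:2508.14044, with
coefficients in a representation (data) `R` of the matched pair `M`. -/
def IsCocycle2 (M : MatchedPair k g h) (R : MPRepData k g h V W)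
    (c : Cochain2 k g h V W) : Prop :=
  (∀ x1 x2 x3 x4 x5 : g,
    R.ρV x4 x5 (c.ω x1 x2 x3) + R.ρV x5 x3 (c.ω x1 x2 x4) + R.ρV x3 x4 (c.ω x1 x2 x5)
    + c.ω (M.Lg.br x1 x2 x3) x4 x5 + c.ω x3 (M.Lg.br x1 x2 x4) x5
    + c.ω x3 x4 (M.Lg.br x1 x2 x5)
    - R.ρV x1 x2 (c.ω x3 x4 x5) - c.ω x1 x2 (M.Lg.br x3 x4 x5) = 0) ∧
  (∀ (x1 x2 : g) (a1 a2 a3 : h),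
    R.ψW a2 a3 (c.ν x1 x2 a1) + R.ψW a3 a1 (c.ν x1 x2 a2) + R.ψW a1 a2 (c.ν x1 x2 a3)
    + c.θ (M.ρ.ρ x1 x2 a1) a2 a3 + c.θ a1 (M.ρ.ρ x1 x2 a2) a3 + c.θ a1 a2 (M.ρ.ρ x1 x2 a3)
    - R.ρW x1 x2 (c.θ a1 a2 a3) - c.ν x1 x2 (M.Lh.br a1 a2 a3) = 0) ∧
  (∀ (a1 a2 : h) (x1 x2 x3 : g),
    R.ρV x2 x3 (c.φ a1 a2 x1) + R.ρV x3 x1 (c.φ a1 a2 x2) + R.ρV x1 x2 (c.φ a1 a2 x3)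
    + c.ω (M.ψ.ρ a1 a2 x1) x2 x3 + c.ω x1 (M.ψ.ρ a1 a2 x2) x3 + c.ω x1 x2 (M.ψ.ρ a1 a2 x3)
    - R.ψV a1 a2 (c.ω x1 x2 x3) - c.φ a1 a2 (M.Lg.br x1 x2 x3) = 0) ∧
  (∀ (x1 x2 x3 : g) (a1 a2 : h),
    R.B (c.ν x1 x3 a2) a1 x2 + c.φ (M.ρ.ρ x1 x3 a2) a1 x2
    - R.B (c.ν x2 x3 a2) a1 x1 - c.φ (M.ρ.ρ x2 x3 a2) a1 x1
    + R.ρV x1 x2 (c.φ a1 a2 x3) + c.ω x1 x2 (M.ψ.ρ a1 a2 x3)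
    - R.B (c.ν x1 x2 a1) a2 x3 - c.φ (M.ρ.ρ x1 x2 a1) a2 x3 = 0) ∧
  (∀ (a1 a2 a3 : h) (x1 x2 : g),
    R.A (c.φ a1 a3 x2) x1 a2 + c.ν (M.ψ.ρ a1 a3 x2) x1 a2
    - R.A (c.φ a2 a3 x2) x1 a1 - c.ν (M.ψ.ρ a2 a3 x2) x1 a1
    + R.ψW a1 a2 (c.ν x1 x2 a3) + c.θ a1 a2 (M.ρ.ρ x1 x2 a3)
    - R.A (c.φ a1 a2 x1) x2 a3 - c.ν (M.ψ.ρ a1 a2 x1) x2 a3 = 0) ∧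
  (∀ (a1 a2 : h) (x1 x2 x3 : g),
    R.ψV a1 a2 (c.ω x1 x2 x3) + c.φ a1 a2 (M.Lg.br x1 x2 x3)
    + c.φ (M.ρ.ρ x2 x3 a1) a2 x1 + R.B (c.ν x2 x3 a1) a2 x1
    + c.φ a1 (M.ρ.ρ x2 x3 a2) x1 - R.B (c.ν x2 x3 a2) a1 x1
    - c.ω (M.ψ.ρ a1 a2 x1) x2 x3 - R.ρV x2 x3 (c.φ a1 a2 x1) = 0) ∧
  (∀ (x1 x2 : g) (a1 a2 a3 : h),
    R.ρW x1 x2 (c.θ a1 a2 a3) + c.ν x1 x2 (M.Lh.br a1 a2 a3)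
    + c.ν (M.ψ.ρ a2 a3 x1) x2 a1 + R.A (c.φ a2 a3 x1) x2 a1
    + c.ν x1 (M.ψ.ρ a2 a3 x2) a1 - R.A (c.φ a2 a3 x2) x1 a1
    - c.θ (M.ρ.ρ x1 x2 a1) a2 a3 - R.ψW a2 a3 (c.ν x1 x2 a1) = 0) ∧
  (∀ a1 a2 a3 a4 a5 : h,
    R.ψW a4 a5 (c.θ a1 a2 a3) + R.ψW a5 a3 (c.θ a1 a2 a4) + R.ψW a3 a4 (c.θ a1 a2 a5)
    + c.θ (M.Lh.br a1 a2 a3) a4 a5 + c.θ a3 (M.Lh.br a1 a2 a4) a5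
    + c.θ a3 a4 (M.Lh.br a1 a2 a5)
    - R.ψW a1 a2 (c.θ a3 a4 a5) - c.θ a1 a2 (M.Lh.br a3 a4 a5) = 0)

/-- `c` is the image under the differential `D₁` of the 1-cochain `(N1, N2)`. -/
def IsD1 (M : MatchedPair k g h) (R : MPRepData k g h V W)
    (N1 : g →ₗ[k] V) (N2 : h →ₗ[k] W) (c : Cochain2 k g h V W) : Prop :=
  (∀ x1 x2 x3, c.ω x1 x2 x3 =
    R.ρV x2 x3 (N1 x1) + R.ρV x3 x1 (N1 x2) + R.ρV x1 x2 (N1 x3) - N1 (M.Lg.br x1 x2 x3)) ∧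
  (∀ x1 x2 a, c.ν x1 x2 a =
    R.ρW x1 x2 (N2 a) - N2 (M.ρ.ρ x1 x2 a) + R.A (N1 x1) x2 a - R.A (N1 x2) x1 a) ∧
  (∀ a1 a2 x, c.φ a1 a2 x =
    R.ψV a1 a2 (N1 x) - N1 (M.ψ.ρ a1 a2 x) + R.B (N2 a1) a2 x - R.B (N2 a2) a1 x) ∧
  (∀ a1 a2 a3, c.θ a1 a2 a3 =
    R.ψW a2 a3 (N2 a1) + R.ψW a3 a1 (N2 a2) + R.ψW a1 a2 (N2 a3) - N2 (M.Lh.br a1 a2 a3))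

/-- `c` is a 2-coboundary. -/
def IsCoboundary (M : MatchedPair k g h) (R : MPRepData k g h V W)
    (c : Cochain2 k g h V W) : Prop :=
  ∃ (N1 : g →ₗ[k] V) (N2 : h →ₗ[k] W), IsD1 M R N1 N2 c

/-- Two 2-cochains are cohomologous if their difference is a 2-coboundary. -/
def Cohomologous (M : MatchedPair k g h) (R : MPRepData k g h V W)
    (c c' : Cochain2 k g h V W) : Prop :=
  IsCoboundary M R (c - c')

/-- The 1-cocycle conditions `D₁(ζ, η) = 0`. -/
def IsCocycle1 (M : MatchedPair k g h) (R : MPRepData k g h V W)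
    (ζ : g →ₗ[k] V) (η : h →ₗ[k] W) : Prop :=
  (∀ x1 x2 x3,
    R.ρV x2 x3 (ζ x1) + R.ρV x3 x1 (ζ x2) + R.ρV x1 x2 (ζ x3) = ζ (M.Lg.br x1 x2 x3)) ∧
  (∀ x1 x2 a,
    R.ρW x1 x2 (η a) - η (M.ρ.ρ x1 x2 a) + R.A (ζ x1) x2 a - R.A (ζ x2) x1 a = 0) ∧
  (∀ a1 a2 x,
    R.ψV a1 a2 (ζ x) - ζ (M.ψ.ρ a1 a2 x) + R.B (η a1) a2 x - R.B (η a2) a1 x = 0) ∧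
  (∀ a1 a2 a3,
    R.ψW a2 a3 (η a1) + R.ψW a3 a1 (η a2) + R.ψW a1 a2 (η a3) = η (M.Lh.br a1 a2 a3))

/-- The second cohomology group of a matched pair of 3-Lie algebras (as a quotient
of 2-cocycles by the relation of being cohomologous). -/
def H2MPL (M : MatchedPair k g h) (R : MPRepData k g h V W) :=
  Quot (fun c c' : {c : Cochain2 k g h V W // IsCocycle2 M R c} =>
    Cohomologous M R c.1 c'.1)

end CochainSec

section DualSec

variable {k : Type*} [CommRing k] {g : Type*} [AddCommGroup g] [Module k g]

/-- The `k[t]/(t²)`-module structure on `g[t]/(t²) = g × g`, where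
`(a + b t) • (x₀ + x₁ t) = a • x₀ + (a • x₁ + b • x₀) t`. -/
instance dualNumberModule : Module (DualNumber k) (g × g) where
  smul r x := (r.fst • x.1, r.fst • x.2 + r.snd • x.1)
  one_smul x := by
    show ((1 : DualNumber k).fst • x.1, (1 : DualNumber k).fst • x.2
      + (1 : DualNumber k).snd • x.1) = x
    simp
  mul_smul r s x := by
    show ((r * s).fst • x.1, (r * s).fst • x.2 + (r * s).snd • x.1)
      = (r.fst • (s.fst • x.1),
         r.fst • (s.fst • x.2 + s.snd • x.1) + r.snd • (s.fst • x.1))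
    ext
    · simp [TrivSqZeroExt.fst_mul, mul_smul]
    · simp only [TrivSqZeroExt.snd_mul, smul_eq_mul, MulOpposite.smul_eq_mul_unop,
        MulOpposite.unop_op, add_smul, mul_smul, TrivSqZeroExt.fst_mul, smul_add]
      abel
  smul_zero r := by
    show ((r : DualNumber k).fst • (0 : g), r.fst • (0 : g) + r.snd • (0 : g)) = 0
    simp
  smul_add r x y := by
    show (r.fst • (x.1 + y.1), r.fst • (x.2 + y.2) + r.snd • (x.1 + y.1))
      = ((r.fst • x.1, r.fst • x.2 + r.snd • x.1)
        + (r.fst • y.1, r.fst • y.2 + r.snd • y.1))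
    ext <;> (simp [smul_add]; try abel)
  add_smul r s x := by
    show ((r + s).fst • x.1, (r + s).fst • x.2 + (r + s).snd • x.1)
      = ((r.fst • x.1, r.fst • x.2 + r.snd • x.1)
        + (s.fst • x.1, s.fst • x.2 + s.snd • x.1))
    ext <;> (simp [add_smul]; try abel)
  zero_smul x := by
    show ((0 : DualNumber k).fst • x.1, (0 : DualNumber k).fst • x.2
      + (0 : DualNumber k).snd • x.1) = 0
    simp

end DualSec

section DeformSec

variable {k g h : Type*} [CommRing k] [AddCommGroup g] [Module k g]
  [AddCommGroup h] [Module k h]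

/-- The `t`-linear extension of the deformed bracket `[·,·,·] + t ω` on `g[t]/(t²)`. -/
def defBrG (M : MatchedPair k g h) (c : Cochain2 k g h g h) :
    g × g → g × g → g × g → g × g := fun X Y Z =>
  (M.Lg.br X.1 Y.1 Z.1,
   c.ω X.1 Y.1 Z.1 + M.Lg.br X.2 Y.1 Z.1 + M.Lg.br X.1 Y.2 Z.1 + M.Lg.br X.1 Y.1 Z.2)

/-- The `t`-linear extension of the deformed bracket `[·,·,·] + t θ` on `h[t]/(t²)`. -/
def defBrH (M : MatchedPair k g h) (c : Cochain2 k g h g h) :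
    h × h → h × h → h × h → h × h := fun A B C =>
  (M.Lh.br A.1 B.1 C.1,
   c.θ A.1 B.1 C.1 + M.Lh.br A.2 B.1 C.1 + M.Lh.br A.1 B.2 C.1 + M.Lh.br A.1 B.1 C.2)

/-- The `t`-linear extension of the deformed action `ρ + t ν`. -/
def defRho (M : MatchedPair k g h) (c : Cochain2 k g h g h) :
    g × g → g × g → h × h → h × h := fun X Y A =>
  (M.ρ.ρ X.1 Y.1 A.1,
   c.ν X.1 Y.1 A.1 + M.ρ.ρ X.2 Y.1 A.1 + M.ρ.ρ X.1 Y.2 A.1 + M.ρ.ρ X.1 Y.1 A.2)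

/-- The `t`-linear extension of the deformed action `ψ + t φ`. -/
def defPsi (M : MatchedPair k g h) (c : Cochain2 k g h g h) :
    h × h → h × h → g × g → g × g := fun A B X =>
  (M.ψ.ρ A.1 B.1 X.1,
   c.φ A.1 B.1 X.1 + M.ψ.ρ A.2 B.1 X.1 + M.ψ.ρ A.1 B.2 X.1 + M.ψ.ρ A.1 B.1 X.2)

/-- `(ω, θ, ν, φ)` is an infinitesimal deformation of the matched pair `M`: the
`t`-linear extensions of the deformed structure maps make
`(g[t]/(t²), h[t]/(t²))` into a matched pair of 3-Lie algebras over `k[t]/(t²)`. -/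
def IsInfDeformation (M : MatchedPair k g h) (c : Cochain2 k g h g h) : Prop :=
  ∃ Mt : MatchedPair (DualNumber k) (g × g) (h × h),
    (∀ X Y Z, Mt.Lg.br X Y Z = defBrG M c X Y Z) ∧
    (∀ A B C, Mt.Lh.br A B C = defBrH M c A B C) ∧
    (∀ X Y A, Mt.ρ.ρ X Y A = defRho M c X Y A) ∧
    (∀ A B X, Mt.ψ.ρ A B X = defPsi M c A B X)

/-- The map `id + t f` on `g[t]/(t²)`. -/
def tMap (f : g →ₗ[k] g) : g × g → g × g := fun p => (p.1, p.2 + f p.1)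

/-- The pair `(id_g + t f, id_h + t g')` is a morphism of matched pairs over
`k[t]/(t²)` from the deformation `c` to the deformation `c'`. -/
def IsDeformMorphism (M : MatchedPair k g h) (c c' : Cochain2 k g h g h)
    (f : g →ₗ[k] g) (g' : h →ₗ[k] h) : Prop :=
  (∀ X Y Z, tMap f (defBrG M c X Y Z) = defBrG M c' (tMap f X) (tMap f Y) (tMap f Z)) ∧
  (∀ A B C, tMap g' (defBrH M c A B C) = defBrH M c' (tMap g' A) (tMap g' B) (tMap g' C)) ∧
  (∀ X Y A, tMap g' (defRho M c X Y A) = defRho M c' (tMap f X) (tMap f Y) (tMap g' A)) ∧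
  (∀ A B X, tMap f (defPsi M c A B X) = defPsi M c' (tMap g' A) (tMap g' B) (tMap f X))

/-- Equivalence of infinitesimal deformations. -/
def DeformEquiv (M : MatchedPair k g h) (c c' : Cochain2 k g h g h) : Prop :=
  ∃ (f : g →ₗ[k] g) (g' : h →ₗ[k] h), IsDeformMorphism M c c' f g'

end DeformSec

section ExtSec

variable (k : Type*) (g h V W ghat hhat : Type*) [CommRing k]
  [AddCommGroup g] [Module k g] [AddCommGroup h] [Module k h]
  [AddCommGroup V] [Module k V] [AddCommGroup W] [Module k W]
  [AddCommGroup ghat] [Module k ghat] [AddCommGroup hhat] [Module k hhat]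

/-- An abelian extension `0 → V ⋈ W → ĝ ⋈ ĥ → g ⋈ h → 0` of a matched pair of
3-Lie algebras `M` by the pair of modules `(V, W)` (with trivial structure). -/
structure AbelianExt (M : MatchedPair k g h) where
  Mhat : MatchedPair k ghat hhat
  i1 : V →ₗ[k] ghat
  i2 : W →ₗ[k] hhat
  j1 : ghat →ₗ[k] g
  j2 : hhat →ₗ[k] h
  i1_br : ∀ v1 v2 v3, Mhat.Lg.br (i1 v1) (i1 v2) (i1 v3) = 0
  i2_br : ∀ w1 w2 w3, Mhat.Lh.br (i2 w1) (i2 w2) (i2 w3) = 0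
  i_rho : ∀ v1 v2 w, Mhat.ρ.ρ (i1 v1) (i1 v2) (i2 w) = 0
  i_psi : ∀ w1 w2 v, Mhat.ψ.ρ (i2 w1) (i2 w2) (i1 v) = 0
  j1_br : ∀ X Y Z, j1 (Mhat.Lg.br X Y Z) = M.Lg.br (j1 X) (j1 Y) (j1 Z)
  j2_br : ∀ A B C, j2 (Mhat.Lh.br A B C) = M.Lh.br (j2 A) (j2 B) (j2 C)
  j_rho : ∀ X Y A, j2 (Mhat.ρ.ρ X Y A) = M.ρ.ρ (j1 X) (j1 Y) (j2 A)
  j_psi : ∀ A B X, j1 (Mhat.ψ.ρ A B X) = M.ψ.ρ (j2 A) (j2 B) (j1 X)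
  i1_inj : Function.Injective i1
  i2_inj : Function.Injective i2
  j1_surj : Function.Surjective j1
  j2_surj : Function.Surjective j2
  exact1 : ∀ X, j1 X = 0 ↔ ∃ v, i1 v = X
  exact2 : ∀ A, j2 A = 0 ↔ ∃ w, i2 w = A

variable {k g h V W ghat hhat}
variable {M : MatchedPair k g h}

/-- `(s1, s2)` is a section of `(j1, j2)`. -/
def IsSection (E : AbelianExt k g h V W ghat hhat M)
    (s1 : g →ₗ[k] ghat) (s2 : h →ₗ[k] hhat) : Prop :=
  (∀ x, E.j1 (s1 x) = x) ∧ (∀ a, E.j2 (s2 a) = a)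

/-- The representation data `R` on `(V, W)` is the one induced on the abelian
extension `E` (via any section, transported along the injections `i1, i2`). -/
def IsInducedRep (E : AbelianExt k g h V W ghat hhat M)
    (R : MPRepData k g h V W) : Prop :=
  ∀ s1 s2, IsSection E s1 s2 →
    (∀ x1 x2 v, E.i1 (R.ρV x1 x2 v) = E.Mhat.Lg.br (s1 x1) (s1 x2) (E.i1 v)) ∧
    (∀ x1 x2 w, E.i2 (R.ρW x1 x2 w) = E.Mhat.ρ.ρ (s1 x1) (s1 x2) (E.i2 w)) ∧
    (∀ a1 a2 v, E.i1 (R.ψV a1 a2 v) = E.Mhat.ψ.ρ (s2 a1) (s2 a2) (E.i1 v)) ∧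
    (∀ a1 a2 w, E.i2 (R.ψW a1 a2 w) = E.Mhat.Lh.br (s2 a1) (s2 a2) (E.i2 w)) ∧
    (∀ v x a, E.i2 (R.A v x a) = E.Mhat.ρ.ρ (E.i1 v) (s1 x) (s2 a)) ∧
    (∀ w a x, E.i1 (R.B w a x) = E.Mhat.ψ.ρ (E.i2 w) (s2 a) (s1 x))

/-- `c` is the 2-cocycle associated to the abelian extension `E` and the
section `(s1, s2)`. -/
def IsExtCocycle (E : AbelianExt k g h V W ghat hhat M)
    (s1 : g →ₗ[k] ghat) (s2 : h →ₗ[k] hhat) (c : Cochain2 k g h V W) : Prop :=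
  (∀ x1 x2 x3, E.i1 (c.ω x1 x2 x3) =
    E.Mhat.Lg.br (s1 x1) (s1 x2) (s1 x3) - s1 (M.Lg.br x1 x2 x3)) ∧
  (∀ a1 a2 a3, E.i2 (c.θ a1 a2 a3) =
    E.Mhat.Lh.br (s2 a1) (s2 a2) (s2 a3) - s2 (M.Lh.br a1 a2 a3)) ∧
  (∀ x1 x2 a, E.i2 (c.ν x1 x2 a) =
    E.Mhat.ρ.ρ (s1 x1) (s1 x2) (s2 a) - s2 (M.ρ.ρ x1 x2 a)) ∧
  (∀ a1 a2 x, E.i1 (c.φ a1 a2 x) =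
    E.Mhat.ψ.ρ (s2 a1) (s2 a2) (s1 x) - s1 (M.ψ.ρ a1 a2 x))

end ExtSec

section ExtIsoSec

variable {k g h V W ghat hhat ghat' hhat' : Type*} [CommRing k]
  [AddCommGroup g] [Module k g] [AddCommGroup h] [Module k h]
  [AddCommGroup V] [Module k V] [AddCommGroup W] [Module k W]
  [AddCommGroup ghat] [Module k ghat] [AddCommGroup hhat] [Module k hhat]
  [AddCommGroup ghat'] [Module k ghat'] [AddCommGroup hhat'] [Module k hhat']
  {M : MatchedPair k g h}

/-- `(f, gm)` is an isomorphism of abelian extensions from `E` to `E'`. -/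
def IsExtIso (E : AbelianExt k g h V W ghat hhat M)
    (E' : AbelianExt k g h V W ghat' hhat' M)
    (f : ghat →ₗ[k] ghat') (gm : hhat →ₗ[k] hhat') : Prop :=
  Function.Bijective f ∧ Function.Bijective gm ∧
  (∀ X Y Z, f (E.Mhat.Lg.br X Y Z) = E'.Mhat.Lg.br (f X) (f Y) (f Z)) ∧
  (∀ A B C, gm (E.Mhat.Lh.br A B C) = E'.Mhat.Lh.br (gm A) (gm B) (gm C)) ∧
  (∀ X Y A, gm (E.Mhat.ρ.ρ X Y A) = E'.Mhat.ρ.ρ (f X) (f Y) (gm A)) ∧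
  (∀ A B X, f (E.Mhat.ψ.ρ A B X) = E'.Mhat.ψ.ρ (gm A) (gm B) (f X)) ∧
  (∀ v, f (E.i1 v) = E'.i1 v) ∧ (∀ w, gm (E.i2 w) = E'.i2 w) ∧
  (∀ X, E'.j1 (f X) = E.j1 X) ∧ (∀ A, E'.j2 (gm A) = E.j2 A)

end ExtIsoSec

section AutSec

variable {k g h V W ghat hhat : Type*} [CommRing k]
  [AddCommGroup g] [Module k g] [AddCommGroup h] [Module k h]
  [AddCommGroup V] [Module k V] [AddCommGroup W] [Module k W]
  [AddCommGroup ghat] [Module k ghat] [AddCommGroup hhat] [Module k hhat]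

/-- `(f, gm)` is an automorphism of the matched pair `M` (as a pair of linear
equivalences preserving the brackets and actions). -/
def IsMPAut (M : MatchedPair k g h) (f : g ≃ₗ[k] g) (gm : h ≃ₗ[k] h) : Prop :=
  (∀ x y z, f (M.Lg.br x y z) = M.Lg.br (f x) (f y) (f z)) ∧
  (∀ a b c, gm (M.Lh.br a b c) = M.Lh.br (gm a) (gm b) (gm c)) ∧
  (∀ x y a, gm (M.ρ.ρ x y a) = M.ρ.ρ (f x) (f y) (gm a)) ∧
  (∀ a b x, f (M.ψ.ρ a b x) = M.ψ.ρ (gm a) (gm b) (f x))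

/-- A pair of (not necessarily invertible a priori) linear maps is an
automorphism of the matched pair `M`. -/
def IsMPAutMap (M : MatchedPair k g h) (f : g →ₗ[k] g) (gm : h →ₗ[k] h) : Prop :=
  Function.Bijective f ∧ Function.Bijective gm ∧
  (∀ x y z, f (M.Lg.br x y z) = M.Lg.br (f x) (f y) (f z)) ∧
  (∀ a b c, gm (M.Lh.br a b c) = M.Lh.br (gm a) (gm b) (gm c)) ∧
  (∀ x y a, gm (M.ρ.ρ x y a) = M.ρ.ρ (f x) (f y) (gm a)) ∧
  (∀ a b x, f (M.ψ.ρ a b x) = M.ψ.ρ (gm a) (gm b) (f x))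

variable {M : MatchedPair k g h}

/-- The pair `(α, β) = ((α1, α2), (β1, β2))` is inducible: it is the image under
`Φ` of an automorphism `(γ1, γ2)` of the extension preserving `(V, W)`. -/
def Inducible (E : AbelianExt k g h V W ghat hhat M)
    (s1 : g →ₗ[k] ghat) (s2 : h →ₗ[k] hhat)
    (α1 : g ≃ₗ[k] g) (α2 : h ≃ₗ[k] h) (β1 : V ≃ₗ[k] V) (β2 : W ≃ₗ[k] W) : Prop :=
  ∃ (γ1 : ghat ≃ₗ[k] ghat) (γ2 : hhat ≃ₗ[k] hhat),
    IsMPAut E.Mhat γ1 γ2 ∧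
    (∀ v, γ1 (E.i1 v) = E.i1 (β1 v)) ∧ (∀ w, γ2 (E.i2 w) = E.i2 (β2 w)) ∧
    (∀ x, E.j1 (γ1 (s1 x)) = α1 x) ∧ (∀ a, E.j2 (γ2 (s2 a)) = α2 a)

/-- The conditions (Iam1)–(Iam4) of Theorem 5.2 of arXiv:2508.14044 on the pair
of linear maps `(ζ, η)`. -/
def IamCond (M : MatchedPair k g h) (R : MPRepData k g h V W)
    (c : Cochain2 k g h V W)
    (α1 : g ≃ₗ[k] g) (α2 : h ≃ₗ[k] h) (β1 : V ≃ₗ[k] V) (β2 : W ≃ₗ[k] W)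
    (ζ : g →ₗ[k] V) (η : h →ₗ[k] W) : Prop :=
  (∀ x1 x2 x3, β1 (c.ω x1 x2 x3) - c.ω (α1 x1) (α1 x2) (α1 x3) =
      R.ρV (α1 x2) (α1 x3) (ζ x1) + R.ρV (α1 x3) (α1 x1) (ζ x2)
      + R.ρV (α1 x1) (α1 x2) (ζ x3) - ζ (M.Lg.br x1 x2 x3)) ∧
  (∀ a1 a2 a3, β2 (c.θ a1 a2 a3) - c.θ (α2 a1) (α2 a2) (α2 a3) =
      R.ψW (α2 a2) (α2 a3) (η a1) + R.ψW (α2 a3) (α2 a1) (η a2)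
      + R.ψW (α2 a1) (α2 a2) (η a3) - η (M.Lh.br a1 a2 a3)) ∧
  (∀ x1 x2 a, β2 (c.ν x1 x2 a) - c.ν (α1 x1) (α1 x2) (α2 a) =
      R.ρW (α1 x1) (α1 x2) (η a) - η (M.ρ.ρ x1 x2 a)
      + R.A (ζ x1) (α1 x2) (α2 a) - R.A (ζ x2) (α1 x1) (α2 a)) ∧
  (∀ a1 a2 x, β1 (c.φ a1 a2 x) - c.φ (α2 a1) (α2 a2) (α1 x) =
      R.ψV (α2 a1) (α2 a2) (ζ x) - ζ (M.ψ.ρ a1 a2 x)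
      + R.B (η a1) (α2 a2) (α1 x) - R.B (η a2) (α2 a1) (α1 x))

/-- The subgroup `C` of compatible pairs of automorphisms. -/
def InC (M : MatchedPair k g h) (R : MPRepData k g h V W) (c : Cochain2 k g h V W)
    (α1 : g ≃ₗ[k] g) (α2 : h ≃ₗ[k] h) (β1 : V ≃ₗ[k] V) (β2 : W ≃ₗ[k] W) : Prop :=
  ∃ (ζ : g →ₗ[k] V) (η : h →ₗ[k] W), IamCond M R c α1 α2 β1 β2 ζ η

/-- `c'` is the transform `(ω, θ, ν, φ)_{(α,β)}` of the 2-cochain `c` under the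
pair of automorphisms `(α, β)`. -/
def IsTransformed (c : Cochain2 k g h V W)
    (α1 : g ≃ₗ[k] g) (α2 : h ≃ₗ[k] h) (β1 : V ≃ₗ[k] V) (β2 : W ≃ₗ[k] W)
    (c' : Cochain2 k g h V W) : Prop :=
  (∀ x1 x2 x3, c'.ω x1 x2 x3 = β1 (c.ω (α1.symm x1) (α1.symm x2) (α1.symm x3))) ∧
  (∀ a1 a2 a3, c'.θ a1 a2 a3 = β2 (c.θ (α2.symm a1) (α2.symm a2) (α2.symm a3))) ∧
  (∀ x1 x2 a, c'.ν x1 x2 a = β2 (c.ν (α1.symm x1) (α1.symm x2) (α2.symm a))) ∧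
  (∀ a1 a2 x, c'.φ a1 a2 x = β1 (c.φ (α2.symm a1) (α2.symm a2) (α1.symm x)))

end AutSec

/-- The class of a 2-cocycle in the second cohomology group. -/
def H2MPL.mk {k g h V W : Type*} [CommRing k]
    [AddCommGroup g] [Module k g] [AddCommGroup h] [Module k h]
    [AddCommGroup V] [Module k V] [AddCommGroup W] [Module k W]
    (M : MatchedPair k g h) (R : MPRepData k g h V W)
    (c : {c : Cochain2 k g h V W // IsCocycle2 M R c}) : H2MPL M R :=
  Quot.mk _ c

universe u₁ u₂


section Helpers

variable {k : Type*} [CommRing k] {g : Type*} [AddCommGroup g] [Module k g]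

lemma ThreeLie.swap12 (L : ThreeLie k g) (x y z : g) : L.br x y z = - L.br y x z := by
  have h := L.alt₁ (x + y) z
  simp only [map_add, LinearMap.add_apply, L.alt₁] at h
  linear_combination (norm := module) h

lemma ThreeLie.swap23 (L : ThreeLie k g) (x y z : g) : L.br x y z = - L.br x z y := by
  have h := L.alt₂ x (y + z)
  simp only [map_add, LinearMap.add_apply, L.alt₂] at h
  linear_combination (norm := module) h

lemma ThreeLie.rot (L : ThreeLie k g) (x y z : g) : L.br x y z = L.br y z x := by
  rw [L.swap12 x y z, L.swap23 y x z, neg_neg]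

lemma Rep3.swap {V : Type*} [AddCommGroup V] [Module k V] {L : ThreeLie k g}
    (R : Rep3 k g V L) (x y : g) (v : V) : R.ρ x y v = - R.ρ y x v := by
  have h := congrArg (fun (e : Module.End k V) => e v) (R.skew (x + y))
  simp only [map_add, LinearMap.add_apply] at h
  have h1 := congrArg (fun (e : Module.End k V) => e v) (R.skew x)
  have h2 := congrArg (fun (e : Module.End k V) => e v) (R.skew y)
  simp only [LinearMap.zero_apply] at h h1 h2
  linear_combination (norm := module) h - h1 - h2

end Helpers

section TriHelpers
variable {k : Type*} [CommRing k] {g : Type*} [AddCommGroup g] [Module k g]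

lemma ThreeLie.swap13 (L : ThreeLie k g) (x y z : g) : L.br x y z = - L.br z y x := by
  rw [L.rot, L.rot]; exact L.swap23 _ _ _

end TriHelpers

lemma exists_map_pair {k V : Type*} [Field k] [AddCommGroup V] [Module k V] {x y : V}
    (hxy : LinearIndependent k ![x, y]) : ∃ f : V →ₗ[k] V, f x = x ∧ f y = 0 := by
  set p := Submodule.span k (Set.range ![x, y]) with hp
  obtain ⟨q, hq⟩ := Submodule.exists_isCompl p
  set B := Module.Basis.span hxy
  set pr := p.linearProjOfIsCompl q hq
  refine ⟨((B.coord 0).comp pr).smulRight x, ?_, ?_⟩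
  · have hxmem : x ∈ p := Submodule.subset_span ⟨0, rfl⟩
    have h1 : pr x = B 0 := by
      have := Submodule.linearProjOfIsCompl_apply_left hq ⟨x, hxmem⟩
      rw [show ((⟨x, hxmem⟩ : p) : V) = x from rfl] at this
      rw [show pr x = ⟨x, hxmem⟩ from this]
      ext
      rw [Module.Basis.span_apply]
      rfl
    simp [h1, Module.Basis.coord_apply, Module.Basis.repr_self]
  · have hymem : y ∈ p := Submodule.subset_span ⟨1, rfl⟩
    have h1 : pr y = B 1 := by
      have := Submodule.linearProjOfIsCompl_apply_left hq ⟨y, hymem⟩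
      rw [show ((⟨y, hymem⟩ : p) : V) = y from rfl] at this
      rw [show pr y = ⟨y, hymem⟩ from this]
      ext
      rw [Module.Basis.span_apply]
      rfl
    simp [h1, Module.Basis.coord_apply, Module.Basis.repr_self]

lemma tri_vanish {k g V G : Type*} [Field k] [AddCommGroup g] [Module k g]
    [AddCommGroup V] [Module k V] [AddCommGroup G] [Module k G]
    (T : V → g → V → G)
    (Tsmul2 : ∀ (c : k) w y v, T w (c • y) v = c • T w y v)
    (Tsmul3 : ∀ (c : k) w y v, T w y (c • v) = c • T w y v)
    (Talt : ∀ w y, T w y w = 0)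
    (Tskew13 : ∀ w y v, T w y v = - T v y w)
    (Trel : ∀ (K : g →ₗ[k] V) (x1 x2 : g) (v : V), T (K x1) x2 v = T (K x2) x1 v)
    (N : g →ₗ[k] V) (x y z : g) : T (N x) y (N z) = 0 := by
  classical
  have hT0 : ∀ (y : g) (v : V), T 0 y v = 0 := by
    intro y v
    have h := Trel 0 y y v
    have h2 := Tskew13 (0 : V) y v
    have h3 := Tskew13 v y (0 : V)
    -- use smul: T 0 y v = T ((0:k) • 0) ... easier: N' := 0 map; use Tsmul3? slot1 not covered.
    -- use Tskew13 to move to slot 3 and Tsmul3 with c = 0: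
    have : T v y (0 : V) = 0 := by
      have := Tsmul3 (0 : k) v y 0
      simpa using this
    rw [Tskew13, this, neg_zero]
  by_cases hxz : LinearIndependent k ![x, z]
  · by_cases hxy : LinearIndependent k ![x, y]
    · obtain ⟨f, hfx, hfy⟩ := exists_map_pair hxy
      have h := Trel (N ∘ₗ f) x y (N z)
      simp only [LinearMap.comp_apply, hfx, hfy, map_zero] at h
      rw [h, hT0]
    · rw [LinearIndependent.pair_iff] at hxy
      push_neg at hxy
      obtain ⟨a, b, hab, hne⟩ := hxy
      by_cases hb : b = 0
      · subst hb
        have ha : a ≠ 0 := by rintro rfl; exact hne rfl rfl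
        have hx0 : x = 0 := by
          have h1 : a • x = 0 := by simpa using hab
          calc x = (a⁻¹ * a) • x := by rw [inv_mul_cancel₀ ha, one_smul]
          _ = a⁻¹ • (a • x) := by rw [mul_smul]
          _ = 0 := by rw [h1, smul_zero]
        exact absurd hx0 (by
          have := hxz.ne_zero 0
          simpa using this)
      · have hy : y = (-(b⁻¹ * a)) • x := by
          have hby : b • y = -(a • x) := by
            have := hab
            linear_combination (norm := module) this
          calc y = (b⁻¹ * b) • y := by rw [inv_mul_cancel₀ hb, one_smul]
          _ = b⁻¹ • (b • y) := by rw [mul_smul]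
          _ = b⁻¹ • (-(a • x)) := by rw [hby]
          _ = (-(b⁻¹ * a)) • x := by rw [smul_neg, smul_smul, neg_smul]
        rw [hy, Tsmul2]
        have hzx : LinearIndependent k ![z, x] := by
          rw [LinearIndependent.pair_iff] at hxz ⊢
          intro s t hst
          have := hxz t s (by linear_combination (norm := module) hst)
          exact ⟨this.2, this.1⟩
        obtain ⟨f, hfz, hfx⟩ := exists_map_pair hzx
        have h := Trel (N ∘ₗ f) z x (N x)
        simp only [LinearMap.comp_apply, hfz, hfx, map_zero] at h
        rw [Tskew13, h, hT0, neg_zero, smul_zero]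
  · rw [LinearIndependent.pair_iff] at hxz
    push_neg at hxz
    obtain ⟨a, b, hab, hne⟩ := hxz
    by_cases hb : b = 0
    · subst hb
      have ha : a ≠ 0 := by rintro rfl; exact hne rfl rfl
      have hx0 : x = 0 := by
        have h1 : a • x = 0 := by simpa using hab
        calc x = (a⁻¹ * a) • x := by rw [inv_mul_cancel₀ ha, one_smul]
        _ = a⁻¹ • (a • x) := by rw [mul_smul]
        _ = 0 := by rw [h1, smul_zero]
      rw [hx0, map_zero, hT0]
    · have hz : z = (-(b⁻¹ * a)) • x := by
        have hbz : b • z = -(a • x) := by linear_combination (norm := module) hab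
        calc z = (b⁻¹ * b) • z := by rw [inv_mul_cancel₀ hb, one_smul]
        _ = b⁻¹ • (b • z) := by rw [mul_smul]
        _ = b⁻¹ • (-(a • x)) := by rw [hbz]
        _ = (-(b⁻¹ * a)) • x := by rw [smul_neg, smul_smul, neg_smul]
      rw [hz, map_smul, Tsmul3, Talt, smul_zero]

set_option maxHeartbeats 1600000
section RelLemmas
variable {k : Type*} [Field k] {g h V W ghat hhat : Type*}
  [AddCommGroup g] [Module k g] [AddCommGroup h] [Module k h]
  [AddCommGroup V] [Module k V] [AddCommGroup W] [Module k W]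
  [AddCommGroup ghat] [Module k ghat] [AddCommGroup hhat] [Module k hhat]
  {M : MatchedPair k g h}

lemma j1_i1 (E : AbelianExt k g h V W ghat hhat M) (v : V) : E.j1 (E.i1 v) = 0 :=
  (E.exact1 _).mpr ⟨v, rfl⟩

lemma j2_i2 (E : AbelianExt k g h V W ghat hhat M) (w : W) : E.j2 (E.i2 w) = 0 :=
  (E.exact2 _).mpr ⟨w, rfl⟩

lemma isSection_perturb (E : AbelianExt k g h V W ghat hhat M)
    {s1 : g →ₗ[k] ghat} {s2 : h →ₗ[k] hhat} (hs : IsSection E s1 s2)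
    (K1 : g →ₗ[k] V) (K2 : h →ₗ[k] W) :
    IsSection E (s1 + E.i1 ∘ₗ K1) (s2 + E.i2 ∘ₗ K2) := by
  constructor
  · intro x
    simp [hs.1 x, j1_i1 E]
  · intro a
    simp [hs.2 a, j2_i2 E]

variable (E : AbelianExt k g h V W ghat hhat M)
  (s1 : g →ₗ[k] ghat) (s2 : h →ₗ[k] hhat)
  (R : MPRep (V := V) (W := W) M)

lemma rel_b (hs : IsSection E s1 s2) (hR : IsInducedRep E R.toData) (K : g →ₗ[k] V) (x1 x2 : g) (v : V) :
    E.Mhat.Lg.br (E.i1 (K x1)) (s1 x2) (E.i1 v)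
      = E.Mhat.Lg.br (E.i1 (K x2)) (s1 x1) (E.i1 v) := by
  have h1 := (hR s1 s2 hs).1 x1 x2 v
  have h2 := (hR _ _ (isSection_perturb E hs K 0)).1 x1 x2 v
  simp only [LinearMap.add_apply, LinearMap.comp_apply, map_add,
    LinearMap.zero_apply, map_zero, add_zero] at h2
  have h3 := E.i1_br (K x1) (K x2) v
  have S := E.Mhat.Lg.swap12 (s1 x1) (E.i1 (K x2)) (E.i1 v)
  linear_combination (norm := module) h1 - h2 - h3 - S

lemma rel_B (hs : IsSection E s1 s2) (hR : IsInducedRep E R.toData) (K : h →ₗ[k] W) (a1 a2 : h) (w : W) :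
    E.Mhat.Lh.br (E.i2 (K a1)) (s2 a2) (E.i2 w)
      = E.Mhat.Lh.br (E.i2 (K a2)) (s2 a1) (E.i2 w) := by
  have h1 := (hR s1 s2 hs).2.2.2.1 a1 a2 w
  have h2 := (hR _ _ (isSection_perturb E hs 0 K)).2.2.2.1 a1 a2 w
  simp only [LinearMap.add_apply, LinearMap.comp_apply, map_add,
    LinearMap.zero_apply, map_zero, add_zero] at h2
  have h3 := E.i2_br (K a1) (K a2) w
  have S := E.Mhat.Lh.swap12 (s2 a1) (E.i2 (K a2)) (E.i2 w)
  linear_combination (norm := module) h1 - h2 - h3 - S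

lemma rel_r_a (hs : IsSection E s1 s2) (hR : IsInducedRep E R.toData) (K2 : h →ₗ[k] W) (v : V) (x : g) (a : h) :
    E.Mhat.ρ.ρ (E.i1 v) (s1 x) (E.i2 (K2 a)) = 0 := by
  have h1 := (hR s1 s2 hs).2.2.2.2.1 v x a
  have h2 := (hR _ _ (isSection_perturb E hs 0 K2)).2.2.2.2.1 v x a
  simp only [LinearMap.add_apply, LinearMap.comp_apply, map_add,
    LinearMap.zero_apply, map_zero, add_zero] at h2
  linear_combination (norm := module) h1 - h2

lemma rel_r_b (hs : IsSection E s1 s2) (hR : IsInducedRep E R.toData) (K1 : g →ₗ[k] V) (v : V) (x : g) (a : h) :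
    E.Mhat.ρ.ρ (E.i1 v) (E.i1 (K1 x)) (s2 a) = 0 := by
  have h1 := (hR s1 s2 hs).2.2.2.2.1 v x a
  have h2 := (hR _ _ (isSection_perturb E hs K1 0)).2.2.2.2.1 v x a
  simp only [LinearMap.add_apply, LinearMap.comp_apply, map_add,
    LinearMap.zero_apply, map_zero, add_zero] at h2
  linear_combination (norm := module) h1 - h2

lemma rel_r_c (hs : IsSection E s1 s2) (hR : IsInducedRep E R.toData) (K1 : g →ₗ[k] V) (K2 : h →ₗ[k] W) (v : V) (x : g) (a : h) :
    E.Mhat.ρ.ρ (E.i1 v) (E.i1 (K1 x)) (E.i2 (K2 a)) = 0 := by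
  have h1 := (hR s1 s2 hs).2.2.2.2.1 v x a
  have h2 := (hR _ _ (isSection_perturb E hs K1 K2)).2.2.2.2.1 v x a
  simp only [LinearMap.add_apply, LinearMap.comp_apply, map_add,
    LinearMap.zero_apply, map_zero, add_zero] at h2
  have h3 := rel_r_a E s1 s2 R hs hR K2 v x a
  have h4 := rel_r_b E s1 s2 R hs hR K1 v x a
  linear_combination (norm := module) h1 - h2 - h3 - h4

lemma rel_q_a (hs : IsSection E s1 s2) (hR : IsInducedRep E R.toData) (K1 : g →ₗ[k] V) (w : W) (a : h) (x : g) :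
    E.Mhat.ψ.ρ (E.i2 w) (s2 a) (E.i1 (K1 x)) = 0 := by
  have h1 := (hR s1 s2 hs).2.2.2.2.2 w a x
  have h2 := (hR _ _ (isSection_perturb E hs K1 0)).2.2.2.2.2 w a x
  simp only [LinearMap.add_apply, LinearMap.comp_apply, map_add,
    LinearMap.zero_apply, map_zero, add_zero] at h2
  linear_combination (norm := module) h1 - h2

lemma rel_q_b (hs : IsSection E s1 s2) (hR : IsInducedRep E R.toData) (K2 : h →ₗ[k] W) (w : W) (a : h) (x : g) :
    E.Mhat.ψ.ρ (E.i2 w) (E.i2 (K2 a)) (s1 x) = 0 := by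
  have h1 := (hR s1 s2 hs).2.2.2.2.2 w a x
  have h2 := (hR _ _ (isSection_perturb E hs 0 K2)).2.2.2.2.2 w a x
  simp only [LinearMap.add_apply, LinearMap.comp_apply, map_add,
    LinearMap.zero_apply, map_zero, add_zero] at h2
  linear_combination (norm := module) h1 - h2

lemma rel_q_c (hs : IsSection E s1 s2) (hR : IsInducedRep E R.toData) (K1 : g →ₗ[k] V) (K2 : h →ₗ[k] W) (w : W) (a : h) (x : g) :
    E.Mhat.ψ.ρ (E.i2 w) (E.i2 (K2 a)) (E.i1 (K1 x)) = 0 := by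
  have h1 := (hR s1 s2 hs).2.2.2.2.2 w a x
  have h2 := (hR _ _ (isSection_perturb E hs K1 K2)).2.2.2.2.2 w a x
  simp only [LinearMap.add_apply, LinearMap.comp_apply, map_add,
    LinearMap.zero_apply, map_zero, add_zero] at h2
  have h3 := rel_q_a E s1 s2 R hs hR K1 w a x
  have h4 := rel_q_b E s1 s2 R hs hR K2 w a x
  linear_combination (norm := module) h1 - h2 - h3 - h4

lemma vanish_b (hs : IsSection E s1 s2) (hR : IsInducedRep E R.toData) (N : g →ₗ[k] V) (x y z : g) :
    E.Mhat.Lg.br (E.i1 (N x)) (s1 y) (E.i1 (N z)) = 0 := by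
  refine tri_vanish (fun w y v => E.Mhat.Lg.br (E.i1 w) (s1 y) (E.i1 v))
    ?_ ?_ ?_ ?_ ?_ N x y z
  · intro c w y v; simp
  · intro c w y v; simp
  · intro w y
    show E.Mhat.Lg.br (E.i1 w) (s1 y) (E.i1 w) = 0
    rw [E.Mhat.Lg.swap23, E.Mhat.Lg.alt₁, neg_zero]
  · intro w y v
    show E.Mhat.Lg.br (E.i1 w) (s1 y) (E.i1 v) = - E.Mhat.Lg.br (E.i1 v) (s1 y) (E.i1 w)
    exact E.Mhat.Lg.swap13 _ _ _
  · intro K x1 x2 v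
    exact rel_b E s1 s2 R hs hR K x1 x2 v

lemma vanish_B (hs : IsSection E s1 s2) (hR : IsInducedRep E R.toData) (N : h →ₗ[k] W) (a b c : h) :
    E.Mhat.Lh.br (E.i2 (N a)) (s2 b) (E.i2 (N c)) = 0 := by
  refine tri_vanish (fun w y v => E.Mhat.Lh.br (E.i2 w) (s2 y) (E.i2 v))
    ?_ ?_ ?_ ?_ ?_ N a b c
  · intro c w y v; simp
  · intro c w y v; simp
  · intro w y
    show E.Mhat.Lh.br (E.i2 w) (s2 y) (E.i2 w) = 0
    rw [E.Mhat.Lh.swap23, E.Mhat.Lh.alt₁, neg_zero]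
  · intro w y v
    show E.Mhat.Lh.br (E.i2 w) (s2 y) (E.i2 v) = - E.Mhat.Lh.br (E.i2 v) (s2 y) (E.i2 w)
    exact E.Mhat.Lh.swap13 _ _ _
  · intro K x1 x2 v
    exact rel_B E s1 s2 R hs hR K x1 x2 v

end RelLemmas

set_option maxHeartbeats 1600000
section Main
variable {k : Type*} [Field k] {g h V W ghat hhat : Type*}
  [AddCommGroup g] [Module k g] [AddCommGroup h] [Module k h]
  [AddCommGroup V] [Module k V] [AddCommGroup W] [Module k W]
  [AddCommGroup ghat] [Module k ghat] [AddCommGroup hhat] [Module k hhat]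
  {M : MatchedPair k g h}

lemma ext_isCocycle2 (E : AbelianExt k g h V W ghat hhat M)
    (s1 : g →ₗ[k] ghat) (s2 : h →ₗ[k] hhat) (hs : IsSection E s1 s2)
    (R : MPRep (V := V) (W := W) M) (hR : IsInducedRep E R.toData)
    (c : Cochain2 k g h V W) (hc : IsExtCocycle E s1 s2 c) :
    IsCocycle2 M R.toData c := by
  obtain ⟨hρV, hρW, hψV, hψW, hA, hB⟩ := hR s1 s2 hs
  obtain ⟨hω, hθ, hν, hφ⟩ := hc
  refine ⟨?_, ?_, ?_, ?_, ?_, ?_, ?_, ?_⟩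
  · intro x1 x2 x3 x4 x5
    apply E.i1_inj
    simp only [map_add, map_sub, map_zero, hρV, hρW, hψV, hψW, hA, hB, hω, hθ, hν, hφ,
      LinearMap.sub_apply, LinearMap.add_apply]
    have F := E.Mhat.Lg.fund (s1 x1) (s1 x2) (s1 x3) (s1 x4) (s1 x5)
    have H := congrArg s1 (M.Lg.fund x1 x2 x3 x4 x5)
    simp only [map_add] at H
    have C1 := E.Mhat.Lg.rot (s1 (M.Lg.br x1 x2 x3)) (s1 x4) (s1 x5)
    have C2 := E.Mhat.Lg.rot (s1 x5) (s1 x3) (s1 (M.Lg.br x1 x2 x4))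
    have C3 := E.Mhat.Lg.rot (E.Mhat.Lg.br (s1 x1) (s1 x2) (s1 x3)) (s1 x4) (s1 x5)
    have C4 := E.Mhat.Lg.rot (s1 x5) (s1 x3) (E.Mhat.Lg.br (s1 x1) (s1 x2) (s1 x4))
    linear_combination (norm := module) H - F - C3 + C4 + C1 - C2
  · intro x1 x2 a1 a2 a3
    apply E.i2_inj
    simp only [map_add, map_sub, map_zero, hρV, hρW, hψV, hψW, hA, hB, hω, hθ, hν, hφ,
      LinearMap.sub_apply, LinearMap.add_apply]
    have F := E.Mhat.mp4 (s1 x1) (s1 x2) (s2 a1) (s2 a2) (s2 a3)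
    have H := congrArg s2 (M.mp4 x1 x2 a1 a2 a3)
    simp only [map_add] at H
    have C1 := E.Mhat.Lh.rot (s2 (M.ρ.ρ x1 x2 a1)) (s2 a2) (s2 a3)
    have C2 := E.Mhat.Lh.rot (s2 a3) (s2 a1) (s2 (M.ρ.ρ x1 x2 a2))
    have C3 := E.Mhat.Lh.rot (E.Mhat.ρ.ρ (s1 x1) (s1 x2) (s2 a1)) (s2 a2) (s2 a3)
    have C4 := E.Mhat.Lh.rot (s2 a3) (s2 a1) (E.Mhat.ρ.ρ (s1 x1) (s1 x2) (s2 a2))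
    linear_combination (norm := module) H - F - C3 + C4 + C1 - C2
  · intro a1 a2 x1 x2 x3
    apply E.i1_inj
    simp only [map_add, map_sub, map_zero, hρV, hρW, hψV, hψW, hA, hB, hω, hθ, hν, hφ,
      LinearMap.sub_apply, LinearMap.add_apply]
    have F := E.Mhat.mp1 (s2 a1) (s2 a2) (s1 x1) (s1 x2) (s1 x3)
    have H := congrArg s1 (M.mp1 a1 a2 x1 x2 x3)
    simp only [map_add] at H
    have C1 := E.Mhat.Lg.rot (s1 (M.ψ.ρ a1 a2 x1)) (s1 x2) (s1 x3)
    have C2 := E.Mhat.Lg.rot (s1 x3) (s1 x1) (s1 (M.ψ.ρ a1 a2 x2))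
    have C3 := E.Mhat.Lg.rot (E.Mhat.ψ.ρ (s2 a1) (s2 a2) (s1 x1)) (s1 x2) (s1 x3)
    have C4 := E.Mhat.Lg.rot (s1 x3) (s1 x1) (E.Mhat.ψ.ρ (s2 a1) (s2 a2) (s1 x2))
    linear_combination (norm := module) H - F - C3 + C4 + C1 - C2
  · intro x1 x2 x3 a1 a2
    apply E.i1_inj
    simp only [map_add, map_sub, map_zero, hρV, hρW, hψV, hψW, hA, hB, hω, hθ, hν, hφ,
      LinearMap.sub_apply, LinearMap.add_apply]
    have F := E.Mhat.mp2 (s1 x1) (s1 x2) (s1 x3) (s2 a1) (s2 a2)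
    have H := congrArg s1 (M.mp2 x1 x2 x3 a1 a2)
    simp only [map_add, map_sub] at H
    linear_combination (norm := module) H - F
  · intro a1 a2 a3 x1 x2
    apply E.i2_inj
    simp only [map_add, map_sub, map_zero, hρV, hρW, hψV, hψW, hA, hB, hω, hθ, hν, hφ,
      LinearMap.sub_apply, LinearMap.add_apply]
    have F := E.Mhat.mp5 (s2 a1) (s2 a2) (s2 a3) (s1 x1) (s1 x2)
    have H := congrArg s2 (M.mp5 a1 a2 a3 x1 x2)
    simp only [map_add, map_sub] at H
    linear_combination (norm := module) H - F
  · intro a1 a2 x1 x2 x3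
    apply E.i1_inj
    simp only [map_add, map_sub, map_zero, hρV, hρW, hψV, hψW, hA, hB, hω, hθ, hν, hφ,
      LinearMap.sub_apply, LinearMap.add_apply]
    have F := E.Mhat.mp3 (s2 a1) (s2 a2) (s1 x1) (s1 x2) (s1 x3)
    have H := congrArg s1 (M.mp3 a1 a2 x1 x2 x3)
    simp only [map_add] at H
    have S1 := (E.Mhat.ψ).swap (s2 a1) (s2 (M.ρ.ρ x2 x3 a2)) (s1 x1)
    have S2 := (E.Mhat.ψ).swap (s2 a1) (E.Mhat.ρ.ρ (s1 x2) (s1 x3) (s2 a2)) (s1 x1)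
    have C5 := E.Mhat.Lg.rot (s1 (M.ψ.ρ a1 a2 x1)) (s1 x2) (s1 x3)
    have C6 := E.Mhat.Lg.rot (E.Mhat.ψ.ρ (s2 a1) (s2 a2) (s1 x1)) (s1 x2) (s1 x3)
    linear_combination (norm := module) H - F + S1 - S2 - C5 + C6
  · intro x1 x2 a1 a2 a3
    apply E.i2_inj
    simp only [map_add, map_sub, map_zero, hρV, hρW, hψV, hψW, hA, hB, hω, hθ, hν, hφ,
      LinearMap.sub_apply, LinearMap.add_apply]
    have F := E.Mhat.mp6 (s1 x1) (s1 x2) (s2 a1) (s2 a2) (s2 a3)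
    have H := congrArg s2 (M.mp6 x1 x2 a1 a2 a3)
    simp only [map_add] at H
    have S1 := (E.Mhat.ρ).swap (s1 x1) (s1 (M.ψ.ρ a2 a3 x2)) (s2 a1)
    have S2 := (E.Mhat.ρ).swap (s1 x1) (E.Mhat.ψ.ρ (s2 a2) (s2 a3) (s1 x2)) (s2 a1)
    have C5 := E.Mhat.Lh.rot (s2 (M.ρ.ρ x1 x2 a1)) (s2 a2) (s2 a3)
    have C6 := E.Mhat.Lh.rot (E.Mhat.ρ.ρ (s1 x1) (s1 x2) (s2 a1)) (s2 a2) (s2 a3)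
    linear_combination (norm := module) H - F + S1 - S2 - C5 + C6
  · intro a1 a2 a3 a4 a5
    apply E.i2_inj
    simp only [map_add, map_sub, map_zero, hρV, hρW, hψV, hψW, hA, hB, hω, hθ, hν, hφ,
      LinearMap.sub_apply, LinearMap.add_apply]
    have F := E.Mhat.Lh.fund (s2 a1) (s2 a2) (s2 a3) (s2 a4) (s2 a5)
    have H := congrArg s2 (M.Lh.fund a1 a2 a3 a4 a5)
    simp only [map_add] at H
    have C1 := E.Mhat.Lh.rot (s2 (M.Lh.br a1 a2 a3)) (s2 a4) (s2 a5)
    have C2 := E.Mhat.Lh.rot (s2 a5) (s2 a3) (s2 (M.Lh.br a1 a2 a4))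
    have C3 := E.Mhat.Lh.rot (E.Mhat.Lh.br (s2 a1) (s2 a2) (s2 a3)) (s2 a4) (s2 a5)
    have C4 := E.Mhat.Lh.rot (s2 a5) (s2 a3) (E.Mhat.Lh.br (s2 a1) (s2 a2) (s2 a4))
    linear_combination (norm := module) H - F - C3 + C4 + C1 - C2
end Main

set_option maxHeartbeats 3200000
section CohomSec
variable {k : Type*} [Field k] {g h V W ghat hhat : Type*}
  [AddCommGroup g] [Module k g] [AddCommGroup h] [Module k h]
  [AddCommGroup V] [Module k V] [AddCommGroup W] [Module k W]
  [AddCommGroup ghat] [Module k ghat] [AddCommGroup hhat] [Module k hhat]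
  {M : MatchedPair k g h}

lemma sections_cohomologous (E : AbelianExt k g h V W ghat hhat M)
    (R : MPRep (V := V) (W := W) M) (hR : IsInducedRep E R.toData)
    (s1 : g →ₗ[k] ghat) (s2 : h →ₗ[k] hhat) (hs : IsSection E s1 s2)
    (c : Cochain2 k g h V W) (hc : IsExtCocycle E s1 s2 c)
    (s1' : g →ₗ[k] ghat) (s2' : h →ₗ[k] hhat) (hs' : IsSection E s1' s2')
    (c' : Cochain2 k g h V W) (hc' : IsExtCocycle E s1' s2' c') :
    Cohomologous M R.toData c c' := by
  obtain ⟨hρV, hρW, hψV, hψW, hA, hB⟩ := hR s1 s2 hs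
  obtain ⟨hω, hθ, hν, hφ⟩ := hc
  obtain ⟨hω', hθ', hν', hφ'⟩ := hc'
  have key1 : ∀ x : g, ∃ v, E.i1 v = s1 x - s1' x := fun x =>
    (E.exact1 _).mp (by rw [map_sub, hs.1, hs'.1, sub_self])
  have key2 : ∀ a : h, ∃ w, E.i2 w = s2 a - s2' a := fun a =>
    (E.exact2 _).mp (by rw [map_sub, hs.2, hs'.2, sub_self])
  choose n1 hn1 using key1
  choose n2 hn2 using key2
  have hN1add : ∀ a b, n1 (a + b) = n1 a + n1 b := fun a b =>
    E.i1_inj (by rw [map_add, hn1, hn1, hn1, map_add, map_add]; abel)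
  have hN1smul : ∀ (r : k) (a : g), n1 (r • a) = r • n1 a := fun r a =>
    E.i1_inj (by rw [map_smul, hn1, hn1, map_smul, map_smul, smul_sub])
  have hN2add : ∀ a b, n2 (a + b) = n2 a + n2 b := fun a b =>
    E.i2_inj (by rw [map_add, hn2, hn2, hn2, map_add, map_add]; abel)
  have hN2smul : ∀ (r : k) (a : h), n2 (r • a) = r • n2 a := fun r a =>
    E.i2_inj (by rw [map_smul, hn2, hn2, map_smul, map_smul, smul_sub])
  set N1 : g →ₗ[k] V := ⟨⟨n1, hN1add⟩, hN1smul⟩ with hN1def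
  set N2 : h →ₗ[k] W := ⟨⟨n2, hN2add⟩, hN2smul⟩ with hN2def
  have hN1 : ∀ x, E.i1 (N1 x) = s1 x - s1' x := hn1
  have hN2 : ∀ a, E.i2 (N2 a) = s2 a - s2' a := hn2
  have hp' : ∀ x, s1' x = s1 x - E.i1 (N1 x) := fun x => by rw [hN1 x]; abel
  have hq' : ∀ a, s2' a = s2 a - E.i2 (N2 a) := fun a => by rw [hN2 a]; abel
  refine ⟨N1, N2, ?_, ?_, ?_, ?_⟩
  · intro x1 x2 x3
    apply E.i1_inj
    rw [show ((c - c').ω) = c.ω - c'.ω from rfl]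
    simp only [LinearMap.sub_apply, map_add, map_sub, hω, hω', hρV, hp',
      LinearMap.add_apply]
    have R1 := E.Mhat.Lg.rot (E.i1 (N1 x1)) (s1 x2) (s1 x3)
    have R2a := E.Mhat.Lg.rot (s1 x1) (E.i1 (N1 x2)) (s1 x3)
    have R2b := E.Mhat.Lg.rot (E.i1 (N1 x2)) (s1 x3) (s1 x1)
    have Z1r := E.Mhat.Lg.rot (E.i1 (N1 x1)) (E.i1 (N1 x2)) (s1 x3)
    have V1 := vanish_b E s1 s2 R hs hR N1 x2 x3 x1
    have Z2 := vanish_b E s1 s2 R hs hR N1 x1 x2 x3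
    have Z3a := E.Mhat.Lg.rot (s1 x1) (E.i1 (N1 x2)) (E.i1 (N1 x3))
    have Z3b := E.Mhat.Lg.rot (E.i1 (N1 x2)) (E.i1 (N1 x3)) (s1 x1)
    have V3 := vanish_b E s1 s2 R hs hR N1 x3 x1 x2
    have Z4 := E.i1_br (N1 x1) (N1 x2) (N1 x3)
    linear_combination (norm := module) R1 + R2a + R2b - Z1r - V1 - Z2 - Z3a - Z3b - V3 + Z4
  · intro x1 x2 a
    apply E.i2_inj
    rw [show ((c - c').ν) = c.ν - c'.ν from rfl]
    simp only [LinearMap.sub_apply, map_add, map_sub, hν, hν', hρW, hA, hp', hq',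
      LinearMap.add_apply]
    have S := (E.Mhat.ρ).swap (s1 x1) (E.i1 (N1 x2)) (s2 a)
    have Rb := rel_r_b E s1 s2 R hs hR N1 (N1 x1) x2 a
    have Ra1 := rel_r_a E s1 s2 R hs hR N2 (N1 x1) x2 a
    have Sw2 := (E.Mhat.ρ).swap (s1 x1) (E.i1 (N1 x2)) (E.i2 (N2 a))
    have Ra2 := rel_r_a E s1 s2 R hs hR N2 (N1 x2) x1 a
    have Rc := rel_r_c E s1 s2 R hs hR N1 N2 (N1 x1) x2 a
    linear_combination (norm := module) S - Rb - Ra1 - Sw2 + Ra2 + Rc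
  · intro a1 a2 x
    apply E.i1_inj
    rw [show ((c - c').φ) = c.φ - c'.φ from rfl]
    simp only [LinearMap.sub_apply, map_add, map_sub, hφ, hφ', hψV, hB, hp', hq',
      LinearMap.add_apply]
    have S := (E.Mhat.ψ).swap (s2 a1) (E.i2 (N2 a2)) (s1 x)
    have Qb1 := rel_q_b E s1 s2 R hs hR N2 (N2 a1) a2 x
    have Qa1 := rel_q_a E s1 s2 R hs hR N1 (N2 a1) a2 x
    have Sw2 := (E.Mhat.ψ).swap (s2 a1) (E.i2 (N2 a2)) (E.i1 (N1 x))
    have Qa2 := rel_q_a E s1 s2 R hs hR N1 (N2 a2) a1 x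
    have Qc := rel_q_c E s1 s2 R hs hR N1 N2 (N2 a1) a2 x
    linear_combination (norm := module) S - Qb1 - Qa1 - Sw2 + Qa2 + Qc
  · intro a1 a2 a3
    apply E.i2_inj
    rw [show ((c - c').θ) = c.θ - c'.θ from rfl]
    simp only [LinearMap.sub_apply, map_add, map_sub, hθ, hθ', hψW, hq',
      LinearMap.add_apply]
    have R1 := E.Mhat.Lh.rot (E.i2 (N2 a1)) (s2 a2) (s2 a3)
    have R2a := E.Mhat.Lh.rot (s2 a1) (E.i2 (N2 a2)) (s2 a3)
    have R2b := E.Mhat.Lh.rot (E.i2 (N2 a2)) (s2 a3) (s2 a1)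
    have Z1r := E.Mhat.Lh.rot (E.i2 (N2 a1)) (E.i2 (N2 a2)) (s2 a3)
    have V1 := vanish_B E s1 s2 R hs hR N2 a2 a3 a1
    have Z2 := vanish_B E s1 s2 R hs hR N2 a1 a2 a3
    have Z3a := E.Mhat.Lh.rot (s2 a1) (E.i2 (N2 a2)) (E.i2 (N2 a3))
    have Z3b := E.Mhat.Lh.rot (E.i2 (N2 a2)) (E.i2 (N2 a3)) (s2 a1)
    have V3 := vanish_B E s1 s2 R hs hR N2 a3 a1 a2
    have Z4 := E.i2_br (N2 a1) (N2 a2) (N2 a3)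
    linear_combination (norm := module) R1 + R2a + R2b - Z1r - V1 - Z2 - Z3a - Z3b - V3 + Z4
end CohomSec

set_option maxHeartbeats 3200000

/-- The quadruple associated to an abelian extension of a
matched pair of 3-Lie algebras and a section is a 2-cocycle with coefficients in
the induced representation; its cohomology class does not depend on the choice
of the section, and isomorphic abelian extensions determine the same class. -/
theorem extension_cocycle_well_defined
    {k : Type*} [Field k] {g h V W ghat hhat : Type*}
    [AddCommGroup g] [Module k g] [AddCommGroup h] [Module k h]
    [AddCommGroup V] [Module k V] [AddCommGroup W] [Module k W]
    [AddCommGroup ghat] [Module k ghat] [AddCommGroup hhat] [Module k hhat]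
    {M : MatchedPair k g h} (E : AbelianExt k g h V W ghat hhat M)
    (s1 : g →ₗ[k] ghat) (s2 : h →ₗ[k] hhat) (hs : IsSection E s1 s2)
    (R : MPRep (V := V) (W := W) M) (hR : IsInducedRep E R.toData)
    (c : Cochain2 k g h V W) (hc : IsExtCocycle E s1 s2 c) :
    -- (a) it is a 2-cocycle
    IsCocycle2 M R.toData c ∧
    -- (b) the class is independent of the section
    (∀ (s1' : g →ₗ[k] ghat) (s2' : h →ₗ[k] hhat), IsSection E s1' s2' →
      ∀ c' : Cochain2 k g h V W, IsExtCocycle E s1' s2' c' →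
        Cohomologous M R.toData c c') ∧
    -- (c) isomorphic abelian extensions determine the same class
    (∀ (ghat' : Type u₁) (hhat' : Type u₂)
      [AddCommGroup ghat'] [Module k ghat'] [AddCommGroup hhat'] [Module k hhat']
      (E' : AbelianExt k g h V W ghat' hhat' M)
      (f : ghat →ₗ[k] ghat') (gm : hhat →ₗ[k] hhat'), IsExtIso E E' f gm →
      ∀ (s1'' : g →ₗ[k] ghat') (s2'' : h →ₗ[k] hhat'), IsSection E' s1'' s2'' →
        ∀ c'' : Cochain2 k g h V W, IsExtCocycle E' s1'' s2'' c'' →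
          Cohomologous M R.toData c c'') := by
  refine ⟨ext_isCocycle2 E s1 s2 hs R hR c hc, ?_, ?_⟩
  · intro s1' s2' hs' c' hc'
    exact sections_cohomologous E R hR s1 s2 hs c hc s1' s2' hs' c' hc'
  · intro ghat' hhat' _ _ _ _ E' f gm hiso s1'' s2'' hs'' c'' hc''
    obtain ⟨hfbij, hgmbij, hfbr, hgmbr, hrho, hpsi, hfi1, hgmi2, hfj1, hgmj2⟩ := hiso
    let fe := LinearEquiv.ofBijective f hfbij
    let ge := LinearEquiv.ofBijective gm hgmbij
    have hfinv : ∀ X : ghat', f (fe.symm X) = X := fun X => fe.apply_symm_apply X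
    have hginv : ∀ A : hhat', gm (ge.symm A) = A := fun A => ge.apply_symm_apply A
    have hR' : IsInducedRep E' R.toData := by
      intro u1 u2 hu
      set r1 : g →ₗ[k] ghat := fe.symm.toLinearMap ∘ₗ u1 with hr1
      set r2 : h →ₗ[k] hhat := ge.symm.toLinearMap ∘ₗ u2 with hr2
      have hr1x : ∀ x, f (r1 x) = u1 x := fun x => by
        rw [hr1]; simp only [LinearMap.comp_apply, LinearEquiv.coe_coe]; exact hfinv _
      have hr2a : ∀ a, gm (r2 a) = u2 a := fun a => by
        rw [hr2]; simp only [LinearMap.comp_apply, LinearEquiv.coe_coe]; exact hginv _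
      have hsr : IsSection E r1 r2 := by
        constructor
        · intro x
          calc E.j1 (r1 x) = E'.j1 (f (r1 x)) := (hfj1 _).symm
          _ = E'.j1 (u1 x) := by rw [hr1x]
          _ = x := hu.1 x
        · intro a
          calc E.j2 (r2 a) = E'.j2 (gm (r2 a)) := (hgmj2 _).symm
          _ = E'.j2 (u2 a) := by rw [hr2a]
          _ = a := hu.2 a
      obtain ⟨k1, k2, k3, k4, k5, k6⟩ := hR r1 r2 hsr
      refine ⟨?_, ?_, ?_, ?_, ?_, ?_⟩
      · intro x1 x2 v
        calc E'.i1 (R.toData.ρV x1 x2 v) = f (E.i1 (R.toData.ρV x1 x2 v)) := (hfi1 _).symm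
        _ = f (E.Mhat.Lg.br (r1 x1) (r1 x2) (E.i1 v)) := by rw [k1]
        _ = E'.Mhat.Lg.br (f (r1 x1)) (f (r1 x2)) (f (E.i1 v)) := hfbr _ _ _
        _ = E'.Mhat.Lg.br (u1 x1) (u1 x2) (E'.i1 v) := by rw [hr1x, hr1x, hfi1]
      · intro x1 x2 w
        calc E'.i2 (R.toData.ρW x1 x2 w) = gm (E.i2 (R.toData.ρW x1 x2 w)) := (hgmi2 _).symm
        _ = gm (E.Mhat.ρ.ρ (r1 x1) (r1 x2) (E.i2 w)) := by rw [k2]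
        _ = E'.Mhat.ρ.ρ (f (r1 x1)) (f (r1 x2)) (gm (E.i2 w)) := hrho _ _ _
        _ = E'.Mhat.ρ.ρ (u1 x1) (u1 x2) (E'.i2 w) := by rw [hr1x, hr1x, hgmi2]
      · intro a1 a2 v
        calc E'.i1 (R.toData.ψV a1 a2 v) = f (E.i1 (R.toData.ψV a1 a2 v)) := (hfi1 _).symm
        _ = f (E.Mhat.ψ.ρ (r2 a1) (r2 a2) (E.i1 v)) := by rw [k3]
        _ = E'.Mhat.ψ.ρ (gm (r2 a1)) (gm (r2 a2)) (f (E.i1 v)) := hpsi _ _ _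
        _ = E'.Mhat.ψ.ρ (u2 a1) (u2 a2) (E'.i1 v) := by rw [hr2a, hr2a, hfi1]
      · intro a1 a2 w
        calc E'.i2 (R.toData.ψW a1 a2 w) = gm (E.i2 (R.toData.ψW a1 a2 w)) := (hgmi2 _).symm
        _ = gm (E.Mhat.Lh.br (r2 a1) (r2 a2) (E.i2 w)) := by rw [k4]
        _ = E'.Mhat.Lh.br (gm (r2 a1)) (gm (r2 a2)) (gm (E.i2 w)) := hgmbr _ _ _
        _ = E'.Mhat.Lh.br (u2 a1) (u2 a2) (E'.i2 w) := by rw [hr2a, hr2a, hgmi2]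
      · intro v x a
        calc E'.i2 (R.toData.A v x a) = gm (E.i2 (R.toData.A v x a)) := (hgmi2 _).symm
        _ = gm (E.Mhat.ρ.ρ (E.i1 v) (r1 x) (r2 a)) := by rw [k5]
        _ = E'.Mhat.ρ.ρ (f (E.i1 v)) (f (r1 x)) (gm (r2 a)) := hrho _ _ _
        _ = E'.Mhat.ρ.ρ (E'.i1 v) (u1 x) (u2 a) := by rw [hfi1, hr1x, hr2a]
      · intro w a x
        calc E'.i1 (R.toData.B w a x) = f (E.i1 (R.toData.B w a x)) := (hfi1 _).symm
        _ = f (E.Mhat.ψ.ρ (E.i2 w) (r2 a) (r1 x)) := by rw [k6]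
        _ = E'.Mhat.ψ.ρ (gm (E.i2 w)) (gm (r2 a)) (f (r1 x)) := hpsi _ _ _
        _ = E'.Mhat.ψ.ρ (E'.i2 w) (u2 a) (u1 x) := by rw [hgmi2, hr2a, hr1x]
    have hst : IsSection E' (f ∘ₗ s1) (gm ∘ₗ s2) := by
      constructor
      · intro x
        simp only [LinearMap.comp_apply]
        rw [hfj1, hs.1]
      · intro a
        simp only [LinearMap.comp_apply]
        rw [hgmj2, hs.2]
    have hcc : IsExtCocycle E' (f ∘ₗ s1) (gm ∘ₗ s2) c := by
      refine ⟨?_, ?_, ?_, ?_⟩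
      · intro x1 x2 x3
        simp only [LinearMap.comp_apply]
        calc E'.i1 (c.ω x1 x2 x3) = f (E.i1 (c.ω x1 x2 x3)) := (hfi1 _).symm
        _ = f (E.Mhat.Lg.br (s1 x1) (s1 x2) (s1 x3) - s1 (M.Lg.br x1 x2 x3)) := by rw [hc.1]
        _ = _ := by rw [map_sub, hfbr]
      · intro a1 a2 a3
        simp only [LinearMap.comp_apply]
        calc E'.i2 (c.θ a1 a2 a3) = gm (E.i2 (c.θ a1 a2 a3)) := (hgmi2 _).symm
        _ = gm (E.Mhat.Lh.br (s2 a1) (s2 a2) (s2 a3) - s2 (M.Lh.br a1 a2 a3)) := by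
            rw [hc.2.1]
        _ = _ := by rw [map_sub, hgmbr]
      · intro x1 x2 a
        simp only [LinearMap.comp_apply]
        calc E'.i2 (c.ν x1 x2 a) = gm (E.i2 (c.ν x1 x2 a)) := (hgmi2 _).symm
        _ = gm (E.Mhat.ρ.ρ (s1 x1) (s1 x2) (s2 a) - s2 (M.ρ.ρ x1 x2 a)) := by rw [hc.2.2.1]
        _ = _ := by rw [map_sub, hrho]
      · intro a1 a2 x
        simp only [LinearMap.comp_apply]
        calc E'.i1 (c.φ a1 a2 x) = f (E.i1 (c.φ a1 a2 x)) := (hfi1 _).symm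
        _ = f (E.Mhat.ψ.ρ (s2 a1) (s2 a2) (s1 x) - s1 (M.ψ.ρ a1 a2 x)) := by rw [hc.2.2.2]
        _ = _ := by rw [map_sub, hpsi]
    exact sections_cohomologous E' R hR' (f ∘ₗ s1) (gm ∘ₗ s2) hst c hcc s1'' s2'' hs'' c'' hc''
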